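/- Let t > 0 and let θ_t(z) = z·exp(t(z+1)/(2(z−1))). The function ψ(z) = θ_t(z)/(1 − θ_t(z)) is holomorphic on the open unit disk (since |θ_t(z)| < 1 there), and its Taylor series at 0 is ψ(z) = ∑_{n≥1} m_n(t) zⁿ, where for n ≥ 1, m_n(t) = ∑_{k=1}^{n} L^{(1)}_{n−k}(kt)·e^{−kt/2} − 2·∑_{k=1}^{n−1} L^{(1)}_{n−k−1}(kt)·e^{−kt/2} + ∑_{k=1}^{n−2} L^{(1)}_{n−k−2}(kt)·e^{−kt/2}, the sums being empty when their upper limit is smaller than 1. In particular, m_n(t) is the n-th moment of the distribution ν_t of the boolean unitary Brownian motion at time t. -/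

import Mathlib

/-- The `n`-th Laguerre polynomial of index `1`:
`L⁽¹⁾_n(x) = ∑_{i=0}^n (-1)^i (n+1 choose n-i) xⁱ/i!`. -/
noncomputable def laguerreL1 (n : ℕ) (x : ℝ) : ℝ :=
  ∑ i ∈ Finset.range (n + 1),
    (-1 : ℝ) ^ i * ((n + 1).choose (n - i) : ℝ) * x ^ i / (Nat.factorial i : ℝ)

/-- The `n`-th moment of the distribution of the boolean unitary Brownian motion:
`m_n(t) = ∑_{k=1}^n L⁽¹⁾_{n-k}(kt) e^{-kt/2} - 2 ∑_{k=1}^{n-1} L⁽¹⁾_{n-k-1}(kt) e^{-kt/2}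
  + ∑_{k=1}^{n-2} L⁽¹⁾_{n-k-2}(kt) e^{-kt/2}`. -/
noncomputable def booleanMoment (t : ℝ) (n : ℕ) : ℝ :=
  (∑ k ∈ Finset.Icc 1 n, laguerreL1 (n - k) (k * t) * Real.exp (-(k * t) / 2))
    - 2 * (∑ k ∈ Finset.Icc 1 (n - 1),
        laguerreL1 (n - k - 1) (k * t) * Real.exp (-(k * t) / 2))
    + (∑ k ∈ Finset.Icc 1 (n - 2),
        laguerreL1 (n - k - 2) (k * t) * Real.exp (-(k * t) / 2))

namespace Stmt18Aux


noncomputable def dd {K : Type*} [RCLike K] (x : K) (n : ℕ) : K :=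
  ∑ m ∈ Finset.range (n + 1), x ^ m / (Nat.factorial m : K) * ((n - 1).choose (n - m) : K)

lemma chooseid (a b : ℕ) :
    (a+3).choose (b+2) + (a+1).choose b = (a+1).choose (b+2) + 2 * (a+2).choose (b+1) := by
  have h1 : (a+3).choose (b+2) = (a+2).choose (b+1) + (a+2).choose (b+2) :=
    Nat.choose_succ_succ (a+2) (b+1)
  have h2 : (a+2).choose (b+2) = (a+1).choose (b+1) + (a+1).choose (b+2) :=
    Nat.choose_succ_succ (a+1) (b+1)
  have h3 : (a+2).choose (b+1) = (a+1).choose b + (a+1).choose (b+1) :=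
    Nat.choose_succ_succ (a+1) b
  omega

lemma dd_neg_eq (j : ℕ) (x : ℝ) :
    dd (-x) j = laguerreL1 j x - 2 * (if 1 ≤ j then laguerreL1 (j-1) x else 0)
      + (if 2 ≤ j then laguerreL1 (j-2) x else 0) := by
  match j with
  | 0 => simp [dd, laguerreL1]
  | 1 =>
      simp only [dd, laguerreL1, Finset.sum_range_succ, Finset.sum_range_zero]
      norm_num
  | (a+2) =>
      have e1 : (∑ m ∈ Finset.range (a+3),
          (if m ≤ a+1 then (-1:ℝ)^m * ((a+2).choose (a+1-m) : ℝ) * x^m / (Nat.factorial m : ℝ)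
            else 0)) = laguerreL1 (a+1) x := by
        rw [Finset.sum_range_succ _ (a+2), if_neg (by omega), add_zero, laguerreL1]
        exact Finset.sum_congr rfl fun m hm =>
          if_pos (by simp only [Finset.mem_range] at hm; omega)
      have e0 : (∑ m ∈ Finset.range (a+3),
          (if m ≤ a then (-1:ℝ)^m * ((a+1).choose (a-m) : ℝ) * x^m / (Nat.factorial m : ℝ)
            else 0)) = laguerreL1 a x := by
        rw [Finset.sum_range_succ _ (a+2), if_neg (by omega), add_zero,
          Finset.sum_range_succ _ (a+1), if_neg (by omega), add_zero, laguerreL1]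
        exact Finset.sum_congr rfl fun m hm =>
          if_pos (by simp only [Finset.mem_range] at hm; omega)
      rw [if_pos (by omega : 1 ≤ a + 2), if_pos (by omega : 2 ≤ a + 2)]
      have ha1 : a + 2 - 1 = a + 1 := by omega
      have ha2 : a + 2 - 2 = a := by omega
      rw [ha1, ha2, ← e1, ← e0, laguerreL1, dd]
      rw [Finset.mul_sum, ← Finset.sum_sub_distrib, ← Finset.sum_add_distrib]
      refine Finset.sum_congr rfl fun m hm => ?_
      simp only [Finset.mem_range] at hm
      rw [ha1]
      rcases (by omega : m ≤ a ∨ m = a + 1 ∨ m = a + 2) with h | h | h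
      · obtain ⟨b, hb⟩ : ∃ b, a - m = b := ⟨a - m, rfl⟩
        have hb2 : a + 2 - m = b + 2 := by omega
        have hb1 : a + 1 - m = b + 1 := by omega
        have hb3 : a + 2 + 1 = a + 3 := by omega
        rw [if_pos (by omega : m ≤ a + 1), if_pos h, hb2, hb1, hb, hb3]
        have key : ((a+1).choose (b+2) : ℝ)
            = ((a+3).choose (b+2) : ℝ) - 2*((a+2).choose (b+1) : ℝ) + ((a+1).choose b : ℝ) := by
          have h' := congrArg (Nat.cast : ℕ → ℝ) (chooseid a b)
          push_cast at h'
          linarith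
        rw [key, neg_pow]
        ring
      · subst h
        rw [if_pos (by omega : a + 1 ≤ a + 1), if_neg (by omega : ¬ (a + 1 ≤ a))]
        have h1 : a + 2 - (a+1) = 1 := by omega
        have h0 : a + 1 - (a+1) = 0 := by omega
        have h3 : a + 2 + 1 = a + 3 := by omega
        rw [h1, h0, h3, Nat.choose_one_right, Nat.choose_one_right, Nat.choose_zero_right,
          neg_pow]
        push_cast
        ring
      · subst h
        rw [if_neg (by omega : ¬ (a + 2 ≤ a + 1)), if_neg (by omega : ¬ (a + 2 ≤ a))]
        have h1 : a + 2 - (a+2) = 0 := by omega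
        have h3 : a + 2 + 1 = a + 3 := by omega
        rw [h1, h3, Nat.choose_zero_right, Nat.choose_zero_right, neg_pow]
        push_cast
        ring

lemma booleanMoment_eq (t : ℝ) (n : ℕ) :
    booleanMoment t n
      = ∑ k ∈ Finset.Icc 1 n, Real.exp (-((k:ℝ) * t) / 2) * dd (-((k:ℝ) * t)) (n - k) := by
  have hsplit : ∀ k ∈ Finset.Icc 1 n,
      Real.exp (-((k:ℝ) * t) / 2) * dd (-((k:ℝ) * t)) (n - k)
        = laguerreL1 (n-k) ((k:ℝ)*t) * Real.exp (-((k:ℝ)*t)/2)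
          - 2 * ((if 1 ≤ n - k then laguerreL1 (n-k-1) ((k:ℝ)*t) else 0) * Real.exp (-((k:ℝ)*t)/2))
          + (if 2 ≤ n - k then laguerreL1 (n-k-2) ((k:ℝ)*t) else 0) * Real.exp (-((k:ℝ)*t)/2) := by
    intro k hk
    rw [dd_neg_eq]
    ring
  rw [Finset.sum_congr rfl hsplit, Finset.sum_add_distrib, Finset.sum_sub_distrib,
    ← Finset.mul_sum]
  have h2 : (∑ k ∈ Finset.Icc 1 n,
      (if 1 ≤ n - k then laguerreL1 (n-k-1) ((k:ℝ)*t) else 0) * Real.exp (-((k:ℝ)*t)/2))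
      = ∑ k ∈ Finset.Icc 1 (n-1), laguerreL1 (n-k-1) ((k:ℝ)*t) * Real.exp (-((k:ℝ)*t)/2) := by
    rw [← Finset.sum_subset (Finset.Icc_subset_Icc_right (Nat.sub_le n 1))
      (fun k hk hk' => by
        rw [if_neg, zero_mul]
        simp only [Finset.mem_Icc] at hk hk'
        omega)]
    exact Finset.sum_congr rfl fun k hk => by
      rw [if_pos]
      simp only [Finset.mem_Icc] at hk
      omega
  have h3 : (∑ k ∈ Finset.Icc 1 n,
      (if 2 ≤ n - k then laguerreL1 (n-k-2) ((k:ℝ)*t) else 0) * Real.exp (-((k:ℝ)*t)/2))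
      = ∑ k ∈ Finset.Icc 1 (n-2), laguerreL1 (n-k-2) ((k:ℝ)*t) * Real.exp (-((k:ℝ)*t)/2) := by
    rw [← Finset.sum_subset (Finset.Icc_subset_Icc_right (Nat.sub_le n 2))
      (fun k hk hk' => by
        rw [if_neg, zero_mul]
        simp only [Finset.mem_Icc] at hk hk'
        omega)]
    exact Finset.sum_congr rfl fun k hk => by
      rw [if_pos]
      simp only [Finset.mem_Icc] at hk
      omega
  rw [h2, h3, booleanMoment]


lemma dd_real_cast (x : ℝ) (n : ℕ) : dd ((x : ℂ)) n = ((dd x n : ℝ) : ℂ) := by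
  rw [dd, dd]
  push_cast
  rfl

lemma dd_norm_le (x : ℝ) (n : ℕ) : ‖dd ((x : ℂ)) n‖ ≤ dd |x| n := by
  refine (norm_sum_le _ _).trans (le_of_eq (Finset.sum_congr rfl fun m hm => ?_))
  rw [norm_mul, norm_div, norm_pow, Complex.norm_real, Complex.norm_natCast,
    Complex.norm_natCast, Real.norm_eq_abs]

lemma hasSum_fiber {K : Type*} [RCLike K] {z : K} (hz : ‖z‖ < 1) (c : K) (m : ℕ) :
    HasSum (fun j : ℕ => c * ((m + j - 1).choose j : K) * z ^ (m + j))
      (c * (z ^ m / (1 - z) ^ m)) := by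
  have hz1 : (1 : K) - z ≠ 0 := by
    intro h
    rw [sub_eq_zero] at h
    rw [← h] at hz
    simp at hz
  cases m with
  | zero =>
    have hf : (fun j : ℕ => c * ((0 + j - 1).choose j : K) * z ^ (0 + j))
        = fun j => if j = 0 then c else 0 := by
      funext j
      cases j with
      | zero => simp
      | succ j =>
          rw [if_neg (Nat.succ_ne_zero j)]
          have : (0 + (j+1) - 1).choose (j+1) = 0 :=
            Nat.choose_eq_zero_of_lt (by omega)
          rw [this]
          simp
    rw [hf]
    simpa using hasSum_ite_eq 0 c
  | succ m' =>
    have h := (hasSum_choose_mul_geometric_of_norm_lt_one m' hz).mul_left (c * z ^ (m' + 1))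
    have hfe : (fun j : ℕ => c * z ^ (m' + 1) * (((j + m').choose m' : K) * z ^ j))
        = fun j : ℕ => c * ((m' + 1 + j - 1).choose j : K) * z ^ (m' + 1 + j) := by
      funext j
      have hc : (m' + 1 + j - 1).choose j = (j + m').choose m' := by
        have h1 : m' + 1 + j - 1 = j + m' := by omega
        rw [h1]
        have := Nat.choose_symm (Nat.le_add_left m' j)
        rwa [Nat.add_sub_cancel] at this
      rw [hc, pow_add]
      ring
    rw [hfe] at h
    rw [mul_one_div, mul_div_assoc] at h
    exact h

set_option maxHeartbeats 1000000 in
lemma hasSum_dd {K : Type*} [RCLike K] (x : K) {z : K} (hz : ‖z‖ < 1) :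
    HasSum (fun n : ℕ => dd x n * z ^ n) (NormedSpace.exp (x * (z / (1 - z)))) := by
  have hz1 : (1 : K) - z ≠ 0 := by
    intro h
    rw [sub_eq_zero] at h
    rw [← h] at hz
    simp at hz
  set H : ℕ × ℕ → K := fun p =>
    x ^ p.1 / (Nat.factorial p.1 : K) * ((p.1 + p.2 - 1).choose p.2 : K) * z ^ (p.1 + p.2)
    with hH
  have hfib : ∀ m, HasSum (fun j => H (m, j))
      (x ^ m / (Nat.factorial m : K) * (z ^ m / (1 - z) ^ m)) :=
    fun m => hasSum_fiber hz _ m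
  have hrz : ‖(‖z‖ : ℝ)‖ < 1 := by
    rwa [Real.norm_eq_abs, abs_of_nonneg (norm_nonneg z)]
  have hnormfib : ∀ m, HasSum (fun j => ‖H (m, j)‖)
      (‖x‖ ^ m / (Nat.factorial m : ℝ) * (‖z‖ ^ m / (1 - ‖z‖) ^ m)) := by
    intro m
    have h := hasSum_fiber (K := ℝ) hrz (‖x‖ ^ m / (Nat.factorial m : ℝ)) m
    refine HasSum.congr_fun h fun j => ?_
    simp only [hH, norm_mul, norm_div, norm_pow, RCLike.norm_natCast]
  have hsummable : Summable fun p => ‖H p‖ := by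
    refine (summable_prod_of_nonneg (fun p => norm_nonneg _)).2
      ⟨fun m => (hnormfib m).summable, ?_⟩
    have he : (fun m => ∑' j, ‖H (m, j)‖)
        = fun m => (‖x‖ * (‖z‖ / (1 - ‖z‖))) ^ m / (Nat.factorial m : ℝ) := by
      funext m
      rw [(hnormfib m).tsum_eq, mul_pow, div_pow]
      ring
    rw [he]
    exact Real.summable_pow_div_factorial _
  have houter : HasSum (fun m => x ^ m / (Nat.factorial m : K) * (z ^ m / (1 - z) ^ m))
      (NormedSpace.exp (x * (z / (1 - z)))) := by
    have h := NormedSpace.expSeries_div_hasSum_exp (x * (z / (1 - z)))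
    refine HasSum.congr_fun h fun m => ?_
    rw [mul_pow, div_pow]
    ring
  have hH2 : HasSum H (NormedSpace.exp (x * (z / (1 - z)))) := by
    have h1 := (Summable.of_norm hsummable).hasSum
    have h2 := h1.prod_fiberwise hfib
    rwa [h2.unique houter] at h1
  have hsig := (Finset.HasAntidiagonal.sigmaAntidiagonalEquivProd.hasSum_iff).2 hH2
  refine HasSum.sigma hsig fun n => ?_
  have h3 : ∑ p ∈ Finset.HasAntidiagonal.antidiagonal n, H p = dd x n * z ^ n := by
    rw [Finset.Nat.sum_antidiagonal_eq_sum_range_succ_mk, dd, Finset.sum_mul]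
    refine Finset.sum_congr rfl fun m hm => ?_
    have hmn : m ≤ n := Nat.lt_succ_iff.mp (Finset.mem_range.mp hm)
    have h4 : m + (n - m) = n := by omega
    simp only [hH, h4]
  have h5 := hasSum_fintype (fun c : (Finset.HasAntidiagonal.antidiagonal n : Finset (ℕ × ℕ)) => H c)
  rwa [Finset.sum_coe_sort, h3] at h5


lemma ne_one_of_norm_lt {z : ℂ} (hz : ‖z‖ < 1) : z ≠ 1 := by
  intro h
  rw [h] at hz
  simp at hz

lemma theta_norm_le {t : ℝ} (ht : 0 ≤ t) {z : ℂ} (hz : ‖z‖ < 1) :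
    ‖z * Complex.exp ((t : ℂ) * (z + 1) / (2 * (z - 1)))‖ ≤ ‖z‖ := by
  rw [norm_mul]
  have hn : z.re ^ 2 + z.im ^ 2 < 1 := by
    have h1 : Complex.normSq z < 1 := by
      rw [Complex.normSq_eq_norm_sq]
      have : ‖z‖ < 1 := hz
      nlinarith [norm_nonneg z]
    rwa [Complex.normSq_apply, ← pow_two, ← pow_two] at h1
  have hre : ((t : ℂ) * (z + 1) / (2 * (z - 1))).re ≤ 0 := by
    rw [Complex.div_re]
    have hnum1 : ((t : ℂ) * (z + 1)).re * (2 * (z - 1) : ℂ).re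
        + ((t : ℂ) * (z + 1)).im * (2 * (z - 1) : ℂ).im ≤ 0 := by
      simp only [Complex.mul_re, Complex.mul_im, Complex.add_re, Complex.add_im,
        Complex.sub_re, Complex.sub_im, Complex.ofReal_re, Complex.ofReal_im,
        Complex.one_re, Complex.one_im, Complex.re_ofNat, Complex.im_ofNat]
      nlinarith
    have hden : 0 ≤ Complex.normSq (2 * (z - 1)) := Complex.normSq_nonneg _
    have := div_nonpos_of_nonpos_of_nonneg hnum1 hden
    calc ((t : ℂ) * (z + 1)).re * (2 * (z - 1) : ℂ).re / Complex.normSq (2 * (z - 1))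
          + ((t : ℂ) * (z + 1)).im * (2 * (z - 1) : ℂ).im / Complex.normSq (2 * (z - 1))
        = (((t : ℂ) * (z + 1)).re * (2 * (z - 1) : ℂ).re
            + ((t : ℂ) * (z + 1)).im * (2 * (z - 1) : ℂ).im) / Complex.normSq (2 * (z - 1)) := by
          rw [← add_div]
      _ ≤ 0 := this
  have hexp : ‖Complex.exp ((t : ℂ) * (z + 1) / (2 * (z - 1)))‖ ≤ 1 := by
    rw [Complex.norm_exp]
    calc Real.exp ((t : ℂ) * (z + 1) / (2 * (z - 1))).re ≤ Real.exp 0 :=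
          Real.exp_le_exp.2 hre
      _ = 1 := Real.exp_zero
  calc ‖z‖ * ‖Complex.exp ((t : ℂ) * (z + 1) / (2 * (z - 1)))‖ ≤ ‖z‖ * 1 :=
        mul_le_mul_of_nonneg_left hexp (norm_nonneg z)
    _ = ‖z‖ := mul_one _

lemma theta_pow (t : ℝ) {z : ℂ} (hz1 : z ≠ 1) (k : ℕ) :
    (z * Complex.exp ((t : ℂ) * (z + 1) / (2 * (z - 1)))) ^ (k + 1)
      = (Real.exp (-(((k : ℝ) + 1) * t) / 2) : ℂ) * z ^ (k + 1)
        * Complex.exp (((-(((k : ℝ) + 1) * t) : ℝ) : ℂ) * (z / (1 - z))) := by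
  have hz2 : z - 1 ≠ 0 := sub_ne_zero.2 hz1
  have hz3 : (1 : ℂ) - z ≠ 0 := fun h => hz1 (by rw [sub_eq_zero] at h; exact h.symm)
  rw [mul_pow, ← Complex.exp_nat_mul]
  have harg : ((k + 1 : ℕ) : ℂ) * ((t : ℂ) * (z + 1) / (2 * (z - 1)))
      = ((-(((k : ℝ) + 1) * t) / 2 : ℝ) : ℂ) + ((-(((k : ℝ) + 1) * t) : ℝ) : ℂ) * (z / (1 - z)) := by
    push_cast
    field_simp
    ring
  rw [harg, Complex.exp_add, Complex.ofReal_exp]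
  ring

lemma theta_psi_diff (t : ℝ) (ht : 0 ≤ t) :
    DifferentiableOn ℂ
      (fun z : ℂ => z * Complex.exp ((t : ℂ) * (z + 1) / (2 * (z - 1))) /
        (1 - z * Complex.exp ((t : ℂ) * (z + 1) / (2 * (z - 1)))))
      (Metric.ball (0 : ℂ) 1) := by
  have hball : ∀ z ∈ Metric.ball (0 : ℂ) 1, ‖z‖ < 1 := by
    intro z hz
    simpa [Metric.mem_ball, dist_zero_right] using hz
  have hden : ∀ z ∈ Metric.ball (0 : ℂ) 1, (2 : ℂ) * (z - 1) ≠ 0 := by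
    intro z hz
    exact mul_ne_zero two_ne_zero (sub_ne_zero.2 (ne_one_of_norm_lt (hball z hz)))
  have htheta : DifferentiableOn ℂ
      (fun z : ℂ => z * Complex.exp ((t : ℂ) * (z + 1) / (2 * (z - 1))))
      (Metric.ball (0 : ℂ) 1) := by
    refine DifferentiableOn.mul differentiableOn_id (DifferentiableOn.cexp ?_)
    exact DifferentiableOn.div (by fun_prop) (by fun_prop) hden
  refine DifferentiableOn.div htheta ((differentiableOn_const 1).sub htheta) ?_
  intro z hz
  intro h
  rw [sub_eq_zero] at h
  have h1 : ‖z * Complex.exp ((t : ℂ) * (z + 1) / (2 * (z - 1)))‖ < 1 :=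
    lt_of_le_of_lt (theta_norm_le ht (hball z hz)) (hball z hz)
  rw [← h] at h1
  simp at h1


lemma bm_range (t : ℝ) (N : ℕ) :
    booleanMoment t (N+1)
      = ∑ k ∈ Finset.range (N+1),
          Real.exp (-(((k:ℝ)+1)*t)/2) * dd (-(((k:ℝ)+1)*t)) (N-k) := by
  rw [booleanMoment_eq, ← Finset.Ico_add_one_right_eq_Icc, Finset.sum_Ico_eq_sum_range]
  refine Finset.sum_congr (by congr 1) fun k hk => ?_
  have h1 : N + 1 - (1 + k) = N - k := by omega
  have h2 : ((1 + k : ℕ) : ℝ) = (k : ℝ) + 1 := by push_cast; ring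
  rw [h1, h2]

lemma key (t : ℝ) (ht : 0 < t) {z : ℂ} (hz2 : ‖z‖ < 1/2) (hze : ‖z‖ < Real.exp (-(t/2))) :
    HasSum (fun N : ℕ => ((booleanMoment t (N+1) : ℝ) : ℂ) * z ^ (N+1))
      (z * Complex.exp ((t:ℂ)*(z+1)/(2*(z-1))) /
        (1 - z * Complex.exp ((t:ℂ)*(z+1)/(2*(z-1)))))
    ∧ Summable (fun N : ℕ => |booleanMoment t (N+1)| * ‖z‖ ^ (N+1)) := by
  have hr1 : ‖z‖ < 1 := lt_trans hz2 (by norm_num)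
  have hz1 : z ≠ 1 := ne_one_of_norm_lt hr1
  have hz3 : (0:ℝ) < 1 - ‖z‖ := by linarith
  set θ := z * Complex.exp ((t:ℂ)*(z+1)/(2*(z-1))) with hθ
  have hθlt : ‖θ‖ < 1 := lt_of_le_of_lt (theta_norm_le ht.le hr1) hr1
  set g : ℕ × ℕ → ℂ := fun p =>
    (Real.exp (-(((p.1:ℝ)+1)*t)/2) : ℂ) * dd (((-(((p.1:ℝ)+1)*t) : ℝ)) : ℂ) p.2
      * z ^ (p.2 + p.1 + 1) with hg
  have hA : ∀ k : ℕ, HasSum (fun n => g (k, n)) (θ ^ (k+1)) := by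
    intro k
    have hdd := hasSum_dd (K := ℂ) (((-(((k:ℝ)+1)*t) : ℝ)) : ℂ) hr1
    have h := hdd.mul_left ((Real.exp (-(((k:ℝ)+1)*t)/2) : ℂ) * z ^ (k+1))
    have hval : (Real.exp (-(((k:ℝ)+1)*t)/2) : ℂ) * z ^ (k+1)
        * NormedSpace.exp ((((-(((k:ℝ)+1)*t) : ℝ)) : ℂ) * (z / (1 - z))) = θ ^ (k+1) := by
      rw [← Complex.exp_eq_exp_ℂ, hθ, theta_pow t hz1 k]
    rw [mul_comm] at h
    have h' : HasSum (fun n => g (k, n)) ((Real.exp (-(((k:ℝ)+1)*t)/2) : ℂ) * z ^ (k+1)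
        * NormedSpace.exp ((((-(((k:ℝ)+1)*t) : ℝ)) : ℂ) * (z / (1 - z)))) := by
      have h'' := hdd.mul_left ((Real.exp (-(((k:ℝ)+1)*t)/2) : ℂ) * z ^ (k+1))
      refine h''.congr_fun fun n => ?_
      simp only [hg]
      rw [pow_add, pow_add]
      ring
    rw [hval] at h'
    exact h'
  set ρ : ℝ := ‖z‖ * Real.exp (t * (‖z‖/(1-‖z‖)) - t/2) with hρ
  have hb : ∀ k : ℕ, HasSum
      (fun n => Real.exp (-(((k:ℝ)+1)*t)/2) * dd ((((k:ℝ)+1)*t)) n * ‖z‖ ^ (n + k + 1))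
      (ρ ^ (k+1)) := by
    intro k
    have hrz : ‖(‖z‖ : ℝ)‖ < 1 := by
      rwa [Real.norm_eq_abs, abs_of_nonneg (norm_nonneg z)]
    have hdd := hasSum_dd (K := ℝ) ((((k:ℝ)+1)*t)) hrz
    have h := hdd.mul_left (Real.exp (-(((k:ℝ)+1)*t)/2) * ‖z‖ ^ (k+1))
    have h1 : Real.exp (-(((k:ℝ)+1)*t)/2) * Real.exp ((((k:ℝ)+1)*t) * (‖z‖/(1-‖z‖)))
        = Real.exp (((k+1:ℕ):ℝ) * (t * (‖z‖/(1-‖z‖)) - t/2)) := by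
      rw [← Real.exp_add]
      congr 1
      push_cast
      ring
    have hval : Real.exp (-(((k:ℝ)+1)*t)/2) * ‖z‖ ^ (k+1)
        * NormedSpace.exp ((((k:ℝ)+1)*t) * (‖z‖ / (1 - ‖z‖))) = ρ ^ (k+1) := by
      calc Real.exp (-(((k:ℝ)+1)*t)/2) * ‖z‖ ^ (k+1)
            * NormedSpace.exp ((((k:ℝ)+1)*t) * (‖z‖ / (1 - ‖z‖)))
          = ‖z‖ ^ (k+1) * (Real.exp (-(((k:ℝ)+1)*t)/2)
              * Real.exp ((((k:ℝ)+1)*t) * (‖z‖/(1-‖z‖)))) := by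
            rw [← Real.exp_eq_exp_ℝ]; ring
        _ = ‖z‖ ^ (k+1) * Real.exp (((k+1:ℕ):ℝ) * (t * (‖z‖/(1-‖z‖)) - t/2)) := by rw [h1]
        _ = ρ ^ (k+1) := by rw [Real.exp_nat_mul, hρ, mul_pow]
    have h' : HasSum
        (fun n => Real.exp (-(((k:ℝ)+1)*t)/2) * dd ((((k:ℝ)+1)*t)) n * ‖z‖ ^ (n + k + 1))
        (Real.exp (-(((k:ℝ)+1)*t)/2) * ‖z‖ ^ (k+1)
          * NormedSpace.exp ((((k:ℝ)+1)*t) * (‖z‖ / (1 - ‖z‖)))) := by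
      refine h.congr_fun fun n => ?_
      rw [pow_add, pow_add]
      ring
    rw [hval] at h'
    exact h'
  have hgb : ∀ p : ℕ × ℕ, ‖g p‖
      ≤ Real.exp (-(((p.1:ℝ)+1)*t)/2) * dd ((((p.1:ℝ)+1)*t)) p.2 * ‖z‖ ^ (p.2 + p.1 + 1) := by
    rintro ⟨k, n⟩
    simp only [hg]
    rw [norm_mul, norm_mul, Complex.norm_real, norm_pow, Real.norm_eq_abs,
      abs_of_pos (Real.exp_pos _)]
    have h1 : ‖dd (((-(((k:ℝ)+1)*t) : ℝ)) : ℂ) n‖ ≤ dd ((((k:ℝ)+1)*t)) n := by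
      have h2 := dd_norm_le (-(((k:ℝ)+1)*t)) n
      rwa [abs_neg, abs_of_nonneg (by positivity)] at h2
    exact mul_le_mul_of_nonneg_right
      (mul_le_mul_of_nonneg_left h1 (Real.exp_pos _).le) (by positivity)
  have hρ0 : 0 ≤ ρ := by positivity
  have hρ1 : ρ < 1 := by
    have hw : ‖z‖/(1-‖z‖) ≤ 1 := by
      rw [div_le_one hz3]; linarith
    have h4 : t * (‖z‖/(1-‖z‖)) - t/2 ≤ t/2 := by nlinarith
    calc ρ ≤ ‖z‖ * Real.exp (t/2) :=
          mul_le_mul_of_nonneg_left (Real.exp_le_exp.2 h4) (norm_nonneg z)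
      _ < Real.exp (-(t/2)) * Real.exp (t/2) :=
          mul_lt_mul_of_pos_right hze (Real.exp_pos _)
      _ = 1 := by rw [← Real.exp_add]; simp
  have hsumρ : Summable (fun k : ℕ => ρ ^ (k+1)) := by
    have h := (summable_geometric_of_lt_one hρ0 hρ1).mul_left ρ
    exact h.congr fun k => (pow_succ' ρ k).symm
  have hfibsum : ∀ k : ℕ, Summable (fun n => ‖g (k, n)‖) := fun k =>
    Summable.of_nonneg_of_le (fun n => norm_nonneg _) (fun n => hgb (k, n)) (hb k).summable
  have hnormsummable : Summable (fun p : ℕ × ℕ => ‖g p‖) := by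
    refine (summable_prod_of_nonneg (fun p => norm_nonneg _)).2 ⟨hfibsum, ?_⟩
    refine Summable.of_nonneg_of_le (fun k => tsum_nonneg fun n => norm_nonneg _)
      (fun k => ?_) hsumρ
    calc ∑' n, ‖g (k, n)‖
        ≤ ∑' n, Real.exp (-(((k:ℝ)+1)*t)/2) * dd ((((k:ℝ)+1)*t)) n * ‖z‖ ^ (n + k + 1) :=
          Summable.tsum_le_tsum (fun n => hgb (k, n)) (hfibsum k) (hb k).summable
      _ = ρ ^ (k+1) := (hb k).tsum_eq
  have hgeo : HasSum (fun k : ℕ => θ ^ (k+1)) (θ / (1 - θ)) := by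
    have h := (hasSum_geometric_of_norm_lt_one hθlt).mul_left θ
    rw [div_eq_mul_inv]
    exact h.congr_fun fun k => pow_succ' θ k
  have hGsum : HasSum g (θ / (1 - θ)) := by
    have h1 := (Summable.of_norm hnormsummable).hasSum
    have h2 := h1.prod_fiberwise hA
    rwa [h2.unique hgeo] at h1
  have hdiag : ∀ N : ℕ, ∑ p ∈ Finset.HasAntidiagonal.antidiagonal N, g p
      = ((booleanMoment t (N+1) : ℝ) : ℂ) * z ^ (N+1) := by
    intro N
    rw [Finset.Nat.sum_antidiagonal_eq_sum_range_succ_mk]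
    have hterm : ∀ k ∈ Finset.range (N+1), g (k, N - k)
        = ((Real.exp (-(((k:ℝ)+1)*t)/2) * dd (-(((k:ℝ)+1)*t)) (N-k) : ℝ) : ℂ) * z ^ (N+1) := by
      intro k hk
      simp only [Finset.mem_range] at hk
      simp only [hg]
      have h4 : N - k + k + 1 = N + 1 := by omega
      rw [h4, dd_real_cast]
      push_cast
      ring
    rw [Finset.sum_congr rfl hterm, ← Finset.sum_mul, ← Complex.ofReal_sum]
    congr 1
    exact_mod_cast (bm_range t N).symm
  have hfinal : HasSum (fun N : ℕ => ((booleanMoment t (N+1) : ℝ) : ℂ) * z ^ (N+1))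
      (θ / (1 - θ)) := by
    have hsig := (Finset.HasAntidiagonal.sigmaAntidiagonalEquivProd.hasSum_iff).2 hGsum
    refine HasSum.sigma hsig fun N => ?_
    have h5 := hasSum_fintype (fun c : (Finset.HasAntidiagonal.antidiagonal N : Finset (ℕ × ℕ)) => g c)
    rwa [Finset.sum_coe_sort, hdiag N] at h5
  refine ⟨hfinal, ?_⟩
  have hsignorm := ((Finset.HasAntidiagonal.sigmaAntidiagonalEquivProd).summable_iff
    (f := fun p : ℕ × ℕ => ‖g p‖)).2 hnormsummable
  have hsigma2 := hsignorm.sigma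
  refine Summable.of_nonneg_of_le (fun N => by positivity) (fun N => ?_) hsigma2
  calc |booleanMoment t (N+1)| * ‖z‖ ^ (N+1)
      = ‖((booleanMoment t (N+1) : ℝ) : ℂ) * z ^ (N+1)‖ := by
        rw [norm_mul, Complex.norm_real, Real.norm_eq_abs, norm_pow]
    _ = ‖∑ p ∈ Finset.HasAntidiagonal.antidiagonal N, g p‖ := by rw [hdiag N]
    _ ≤ ∑ p ∈ Finset.HasAntidiagonal.antidiagonal N, ‖g p‖ := norm_sum_le _ _
    _ = ∑' c : (Finset.HasAntidiagonal.antidiagonal N : Finset (ℕ × ℕ)), ‖g (c : ℕ × ℕ)‖ := by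
        rw [tsum_fintype]
        exact (Finset.sum_coe_sort _ _).symm


end Stmt18Aux

open Stmt18Aux

/-- For `t > 0` and `θ_t(z) = z exp(t(z+1)/(2(z-1)))`, the function
`ψ(z) = θ_t(z)/(1-θ_t(z))` is holomorphic on the open unit disk, and its Taylor series
at `0` is `∑_{n≥1} m_n(t) zⁿ`, with `m_n(t)` given by the Laguerre-polynomial formula;
these are the moments of the distribution `ν_t` of the boolean unitary Brownian motion. -/
theorem stmt_18 (t : ℝ) (ht : 0 < t) :
    DifferentiableOn ℂ
      (fun z : ℂ => z * Complex.exp ((t : ℂ) * (z + 1) / (2 * (z - 1))) /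
        (1 - z * Complex.exp ((t : ℂ) * (z + 1) / (2 * (z - 1)))))
      (Metric.ball (0 : ℂ) 1) ∧
    ∀ z : ℂ, ‖z‖ < 1 →
      HasSum (fun n : ℕ => ((booleanMoment t (n + 1) : ℝ) : ℂ) * z ^ (n + 1))
        (z * Complex.exp ((t : ℂ) * (z + 1) / (2 * (z - 1))) /
          (1 - z * Complex.exp ((t : ℂ) * (z + 1) / (2 * (z - 1))))) := by
  have hψdiff := theta_psi_diff t ht.le
  refine ⟨hψdiff, ?_⟩
  intro z hz
  classical
  set ψ : ℂ → ℂ := fun w => w * Complex.exp ((t:ℂ)*(w+1)/(2*(w-1))) /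
      (1 - w * Complex.exp ((t:ℂ)*(w+1)/(2*(w-1)))) with hψdef
  show HasSum (fun n : ℕ => ((booleanMoment t (n + 1) : ℝ) : ℂ) * z ^ (n + 1)) (ψ z)
  set M : ℕ → ℂ := fun n => if n = 0 then 0 else ((booleanMoment t n : ℝ) : ℂ) with hM
  set q : FormalMultilinearSeries ℂ ℂ ℂ :=
    fun n => M n • ContinuousMultilinearMap.mkPiAlgebraFin ℂ n ℂ with hq
  set δ : ℝ := min (1/2 : ℝ) (Real.exp (-(t/2))) with hδ
  have hδ0 : 0 < δ := lt_min (by norm_num) (Real.exp_pos _)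
  have hsmall : ∀ {w : ℂ}, ‖w‖ < δ → HasSum (fun n => M n * w ^ n) (ψ w) := by
    intro w hw
    have hk := (key t ht (lt_of_lt_of_le hw (min_le_left _ _))
      (lt_of_lt_of_le hw (min_le_right _ _))).1
    have h2 : HasSum (fun n : ℕ => M (n+1) * w ^ (n+1)) (ψ w) := by
      refine hk.congr_fun fun n => ?_
      simp [hM]
    have h3 := (hasSum_nat_add_iff (f := fun n => M n * w ^ n) 1).mp h2
    simpa [hM] using h3
  set ρ : ℝ := δ / 2 with hρ
  have hρ0 : 0 < ρ := by positivity
  have hρδ : ρ < δ := by rw [hρ]; linarith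
  have hρnorm : ‖((ρ : ℝ) : ℂ)‖ = ρ := by
    rw [Complex.norm_real, Real.norm_eq_abs, abs_of_pos hρ0]
  have hk2 := (key t ht (z := ((ρ : ℝ) : ℂ))
    (by rw [hρnorm]; exact lt_of_lt_of_le hρδ (min_le_left _ _))
    (by rw [hρnorm]; exact lt_of_lt_of_le hρδ (min_le_right _ _))).2
  rw [hρnorm] at hk2
  have hsum2 : Summable (fun n : ℕ => ‖M n‖ * ρ ^ n) := by
    rw [← summable_nat_add_iff 1]
    refine hk2.congr fun n => ?_
    simp [hM]
  set ρnn : NNReal := ⟨ρ, hρ0.le⟩ with hρnn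
  have hrad : (ρnn : ENNReal) ≤ q.radius := by
    apply FormalMultilinearSeries.le_radius_of_summable
    refine Summable.of_nonneg_of_le (fun n => by positivity) (fun n => ?_) hsum2
    have h6 : ‖q n‖ ≤ ‖M n‖ := by
      simp only [hq]
      rw [norm_smul (M n) (ContinuousMultilinearMap.mkPiAlgebraFin ℂ n ℂ),
        ContinuousMultilinearMap.norm_mkPiAlgebraFin, mul_one]
    exact mul_le_mul_of_nonneg_right h6 (pow_nonneg hρ0.le n)
  have hqball : HasFPowerSeriesOnBall ψ q 0 (ρnn : ENNReal) := by
    refine ⟨hrad, by exact_mod_cast hρ0, ?_⟩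
    intro y hy
    rw [Metric.emetric_ball_nnreal] at hy
    have hy' : ‖y‖ < ρ := by
      have h := hy
      simp [Metric.mem_ball, dist_zero_right] at h
      exact h
    rw [zero_add]
    refine (hsmall (lt_trans hy' hρδ)).congr_fun fun n => ?_
    simp only [hq, ContinuousMultilinearMap.smul_apply,
      ContinuousMultilinearMap.mkPiAlgebraFin_apply, List.ofFn_const, List.prod_replicate,
      smul_eq_mul]
  set R : ℝ := (1 + ‖z‖) / 2 with hR
  have hR0 : 0 < R := by positivity
  set Rnn : NNReal := ⟨R, hR0.le⟩ with hRnn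
  have hR1 : R < 1 := by rw [hR]; linarith
  have hzR : ‖z‖ < R := by rw [hR]; linarith
  have hdiff2 : DifferentiableOn ℂ ψ (Metric.closedBall 0 (Rnn : ℝ)) := by
    refine hψdiff.mono ?_
    intro w hw
    simp only [Metric.mem_closedBall, dist_zero_right] at hw
    simp only [Metric.mem_ball, dist_zero_right]
    calc ‖w‖ ≤ R := by exact_mod_cast hw
      _ < 1 := hR1
  have hp := hdiff2.hasFPowerSeriesOnBall (R := Rnn) (by exact_mod_cast hR0)
  have hpq := hp.hasFPowerSeriesAt.eq_formalMultilinearSeries hqball.hasFPowerSeriesAt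
  rw [hpq] at hp
  have hz2 : z ∈ EMetric.ball (0:ℂ) (Rnn : ENNReal) := by
    show z ∈ Metric.eball (0:ℂ) (Rnn : ENNReal)
    rw [Metric.emetric_ball_nnreal]
    simp [Metric.mem_ball, dist_zero_right]
    exact hzR
  have h8 := hp.hasSum hz2
  rw [zero_add] at h8
  have h9 : HasSum (fun n => M n * z ^ n) (ψ z) := by
    refine h8.congr_fun fun n => ?_
    simp only [hq, ContinuousMultilinearMap.smul_apply,
      ContinuousMultilinearMap.mkPiAlgebraFin_apply, List.ofFn_const, List.prod_replicate,
      smul_eq_mul]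
  have h10 : HasSum (fun n : ℕ => M (n+1) * z ^ (n+1)) (ψ z) := by
    refine (hasSum_nat_add_iff (f := fun n => M n * z ^ n) 1).mpr ?_
    simpa [hM] using h9
  refine h10.congr_fun fun n => ?_
  simp [hM]
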